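/- arXiv:2503.16756 — 4 statements merged into one kernel-verified Lean document; each statement's English description precedes it below -/
import Mathlib

section
/- Let A be an n×n real matrix, C a d_y×n matrix, B an n×d_u matrix, and suppose A^ℓ = Q₁ N₁^ℓ R₁ + Q₂ N₂^ℓ R₂ for all integers ℓ ≥ 0 (where Q₁ is n×k, N₁ is k×k, R₁ is k×n, Q₂ is n×(n−k), N₂ is (n−k)×(n−k), R₂ is (n−k)×n). Let m, p, q be positive integers, let H be the p×q block matrix with (i,j)-th block C A^{m+i+j−2} B and H̃ the p×q block matrix with (i,j)-th block C Q₁ N₁^{m+i+j−2} R₁ B. Suppose there are constants L > 0 and ρ ∈ (0,1) such that ‖C Q₂ N₂^t R₂ B‖ ≤ L³ ρ^t for every integer t ≥ m. Then ‖H − H̃‖ ≤ √q · p · L³ · ρ^m. -/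
open scoped Matrix.Norms.L2Operator
open Matrix

lemma aux_opNorm_le {a b : Type*} [Fintype a] [Fintype b] [DecidableEq b]
    (M : Matrix a b ℝ) {c : ℝ} (hc : 0 ≤ c)
    (h : ∀ x : EuclideanSpace ℝ b,
      ‖(EuclideanSpace.equiv a ℝ).symm (M *ᵥ x)‖ ≤ c * ‖x‖) : ‖M‖ ≤ c := by
  rw [Matrix.l2_opNorm_def]
  exact ContinuousLinearMap.opNorm_le_bound _ hc fun x => h x

lemma aux_block_norm_sq {a b : Type*} [Fintype a] [Fintype b]
    (z : EuclideanSpace ℝ (a × b)) :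
    ∑ i, ‖(EuclideanSpace.equiv b ℝ).symm (fun s => z (i, s))‖ ^ 2 = ‖z‖ ^ 2 := by
  have h1 : ‖z‖ ^ 2 = ∑ ir : a × b, ‖z ir‖ ^ 2 := by
    rw [EuclideanSpace.norm_eq, Real.sq_sqrt (by positivity)]
  rw [h1, Fintype.sum_prod_type]
  refine Finset.sum_congr rfl fun j _ => ?_
  rw [EuclideanSpace.norm_eq, Real.sq_sqrt (by positivity)]
  rfl

set_option maxHeartbeats 2000000 in
/-- Lemma B.3. Suppose `A^ℓ = Q₁ N₁^ℓ R₁ + Q₂ N₂^ℓ R₂` for all `ℓ ≥ 0`.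
Let `H` be the `p × q` block matrix with `(i,j)`-th block `C A^(m+i+j-2) B` (one-indexed;
zero-indexed exponent `m + i + j`) and `H̃` the block matrix with blocks
`C Q₁ N₁^(m+i+j-2) R₁ B`. If `‖C Q₂ N₂^t R₂ B‖ ≤ L³ ρ^t` for all `t ≥ m` with
`L > 0` and `ρ ∈ (0,1)`, then `‖H − H̃‖ ≤ √q · p · L³ · ρ^m`. -/
theorem hankel_sub_rank_k_approx_norm_le {n k dy du m p q : ℕ}
    (hm : 0 < m) (hp : 0 < p) (hq : 0 < q)
    (A : Matrix (Fin n) (Fin n) ℝ) (C : Matrix (Fin dy) (Fin n) ℝ)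
    (B : Matrix (Fin n) (Fin du) ℝ)
    (Q₁ : Matrix (Fin n) (Fin k) ℝ) (N₁ : Matrix (Fin k) (Fin k) ℝ)
    (R₁ : Matrix (Fin k) (Fin n) ℝ)
    (Q₂ : Matrix (Fin n) (Fin (n - k)) ℝ) (N₂ : Matrix (Fin (n - k)) (Fin (n - k)) ℝ)
    (R₂ : Matrix (Fin (n - k)) (Fin n) ℝ)
    (hdecomp : ∀ ℓ : ℕ, A ^ ℓ = Q₁ * N₁ ^ ℓ * R₁ + Q₂ * N₂ ^ ℓ * R₂)
    (L ρ : ℝ) (hL : 0 < L) (hρ0 : 0 < ρ) (hρ1 : ρ < 1)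
    (htail : ∀ t : ℕ, m ≤ t → ‖C * Q₂ * N₂ ^ t * R₂ * B‖ ≤ L ^ 3 * ρ ^ t)
    (H Ht : Matrix (Fin p × Fin dy) (Fin q × Fin du) ℝ)
    (hH : ∀ (i : Fin p) (j : Fin q) (r : Fin dy) (s : Fin du),
      H (i, r) (j, s) = (C * A ^ (m + (i : ℕ) + (j : ℕ)) * B) r s)
    (hHt : ∀ (i : Fin p) (j : Fin q) (r : Fin dy) (s : Fin du),
      Ht (i, r) (j, s) = (C * Q₁ * N₁ ^ (m + (i : ℕ) + (j : ℕ)) * R₁ * B) r s) :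
    ‖H - Ht‖ ≤ Real.sqrt (q : ℝ) * (p : ℝ) * L ^ 3 * ρ ^ m := by
  set c : ℝ := L ^ 3 * ρ ^ m with hc_def
  have hc0 : 0 ≤ c := by positivity
  set E : ℕ → Matrix (Fin dy) (Fin du) ℝ := fun t => C * Q₂ * N₂ ^ t * R₂ * B with hE_def
  have hD : ∀ (i : Fin p) (j : Fin q) (r : Fin dy) (s : Fin du),
      (H - Ht) (i, r) (j, s) = E (m + (i : ℕ) + (j : ℕ)) r s := by
    intro i j r s
    have h1 : C * A ^ (m + (i : ℕ) + (j : ℕ)) * B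
        = C * Q₁ * N₁ ^ (m + (i : ℕ) + (j : ℕ)) * R₁ * B
          + E (m + (i : ℕ) + (j : ℕ)) := by
      rw [hE_def]; dsimp only; rw [hdecomp]
      simp only [Matrix.mul_add, Matrix.add_mul, Matrix.mul_assoc]
    simp [Matrix.sub_apply, hH, hHt, h1, Matrix.add_apply]
  have hEnorm : ∀ (i : Fin p) (j : Fin q), ‖E (m + (i : ℕ) + (j : ℕ))‖ ≤ c := by
    intro i j
    refine (htail _ (by omega)).trans ?_
    rw [hc_def]
    have : ρ ^ (m + (i : ℕ) + (j : ℕ)) ≤ ρ ^ m :=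
      pow_le_pow_of_le_one hρ0.le hρ1.le (by omega)
    nlinarith [pow_pos hL 3]
  refine aux_opNorm_le (c := Real.sqrt (q:ℝ) * (p:ℝ) * L ^ 3 * ρ ^ m) _ (by positivity) ?_
  intro x
  set xj : Fin q → EuclideanSpace ℝ (Fin du) :=
    fun j => (EuclideanSpace.equiv (Fin du) ℝ).symm (fun s => x (j, s)) with hxj_def
  -- sum of column-block norms
  have hxsum : ∑ j, ‖xj j‖ ≤ Real.sqrt q * ‖x‖ := by
    have hsq : (∑ j, ‖xj j‖) ^ 2 ≤ (q : ℝ) * ∑ j, ‖xj j‖ ^ 2 := by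
      have := sq_sum_le_card_mul_sum_sq (s := (Finset.univ : Finset (Fin q)))
        (f := fun j => ‖xj j‖)
      push_cast at this ⊢
      simpa using this
    have hx2 : ∑ j, ‖xj j‖ ^ 2 = ‖x‖ ^ 2 := aux_block_norm_sq x
    rw [hx2] at hsq
    have h := Real.sqrt_le_sqrt hsq
    rwa [Real.sqrt_sq (by positivity), Real.sqrt_mul (by positivity),
      Real.sqrt_sq (norm_nonneg x)] at h
  -- identify the row blocks of the output
  set z : EuclideanSpace ℝ (Fin p × Fin dy) :=
    (EuclideanSpace.equiv (Fin p × Fin dy) ℝ).symm ((H - Ht) *ᵥ x) with hz_def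
  have hrow : ∀ i : Fin p, (fun r => z (i, r))
      = ∑ j : Fin q, (E (m + (i : ℕ) + (j : ℕ)) *ᵥ fun s => x (j, s)) := by
    intro i
    funext r
    have : z (i, r) = ((H - Ht) *ᵥ x) (i, r) := rfl
    rw [this]
    show ∑ js : Fin q × Fin du, (H - Ht) (i, r) js * x js = _
    rw [Fintype.sum_prod_type, Finset.sum_apply]
    refine Finset.sum_congr rfl fun j _ => ?_
    show _ = ∑ s : Fin du, E (m + (i : ℕ) + (j : ℕ)) r s * x (j, s)
    exact Finset.sum_congr rfl fun s _ => by rw [hD i j r s]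
  -- norm of each row block
  have hrownorm : ∀ i : Fin p,
      ‖(EuclideanSpace.equiv (Fin dy) ℝ).symm (fun r => z (i, r))‖ ≤ c * (Real.sqrt q * ‖x‖) := by
    intro i
    rw [hrow i]
    have hmap : (EuclideanSpace.equiv (Fin dy) ℝ).symm
        (∑ j : Fin q, (E (m + (i : ℕ) + (j : ℕ)) *ᵥ fun s => x (j, s)))
        = ∑ j : Fin q, (EuclideanSpace.equiv (Fin dy) ℝ).symm
            (E (m + (i : ℕ) + (j : ℕ)) *ᵥ fun s => x (j, s)) :=
      map_sum ((EuclideanSpace.equiv (Fin dy) ℝ).symm) _ Finset.univ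
    rw [hmap]
    calc ‖∑ j : Fin q, (EuclideanSpace.equiv (Fin dy) ℝ).symm
            (E (m + (i : ℕ) + (j : ℕ)) *ᵥ fun s => x (j, s))‖
        ≤ ∑ j : Fin q, ‖(EuclideanSpace.equiv (Fin dy) ℝ).symm
            (E (m + (i : ℕ) + (j : ℕ)) *ᵥ fun s => x (j, s))‖ := norm_sum_le _ _
      _ ≤ ∑ j, c * ‖xj j‖ := by
          refine Finset.sum_le_sum fun j _ => ?_
          have h1 := Matrix.l2_opNorm_mulVec (E (m + (i : ℕ) + (j : ℕ))) (xj j)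
          refine h1.trans ?_
          exact mul_le_mul_of_nonneg_right (hEnorm i j) (norm_nonneg _)
      _ = c * ∑ j, ‖xj j‖ := by rw [Finset.mul_sum]
      _ ≤ c * (Real.sqrt q * ‖x‖) := mul_le_mul_of_nonneg_left hxsum hc0
  -- assemble
  have hz2 : ‖z‖ ^ 2 ≤ (p : ℝ) * (c * (Real.sqrt q * ‖x‖)) ^ 2 := by
    rw [← aux_block_norm_sq z]
    calc ∑ i, ‖(EuclideanSpace.equiv (Fin dy) ℝ).symm (fun r => z (i, r))‖ ^ 2
        ≤ ∑ _i : Fin p, (c * (Real.sqrt q * ‖x‖)) ^ 2 := by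
          refine Finset.sum_le_sum fun i _ => ?_
          have := hrownorm i
          nlinarith [norm_nonneg ((EuclideanSpace.equiv (Fin dy) ℝ).symm (fun r => z (i, r)))]
      _ = (p : ℝ) * (c * (Real.sqrt q * ‖x‖)) ^ 2 := by simp [mul_comm]
  have hzle : ‖z‖ ≤ Real.sqrt p * (c * (Real.sqrt q * ‖x‖)) := by
    have h := Real.sqrt_le_sqrt hz2
    rwa [Real.sqrt_sq (norm_nonneg z), Real.sqrt_mul (by positivity),
      Real.sqrt_sq (by positivity)] at h
  refine hzle.trans ?_
  have hsp : Real.sqrt p ≤ (p : ℝ) := by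
    have h1 : (1:ℝ) ≤ (p:ℝ) := Nat.one_le_cast.mpr hp
    nlinarith [Real.sq_sqrt (show (0:ℝ) ≤ (p:ℝ) by positivity), Real.sqrt_nonneg (p:ℝ)]
  calc Real.sqrt p * (c * (Real.sqrt q * ‖x‖))
      ≤ (p : ℝ) * (c * (Real.sqrt q * ‖x‖)) := by
        refine mul_le_mul_of_nonneg_right hsp (by positivity)
    _ = Real.sqrt q * (p : ℝ) * L ^ 3 * ρ ^ m * ‖x‖ := by rw [hc_def]; ring
end

section
/- Let Õ and Ô be (p·d)×k real block matrices, each consisting of p blocks of size d×k, and write M_{i:j} for the submatrix of a block matrix M consisting of its i-th through j-th blocks. Suppose Õ_{2:p} = Õ_{1:p−1}·N₁ for a k×k matrix N₁, suppose Ô_{1:p−1} has full column rank k, let Ŝ be an invertible k×k matrix, and set E := Õ − Ô Ŝ. Define N̂₁ := (Ô_{1:p−1}ᴴ Ô_{1:p−1})⁻¹ Ô_{1:p−1}ᴴ Ô_{2:p}. Then ‖N₁ − Ŝ⁻¹ N̂₁ Ŝ‖ ≤ ‖Ŝ⁻¹‖·(1 + ‖N₁‖)·‖E‖ / σ_min(Ô_{1:p−1}).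 -/
open scoped Matrix.Norms.L2Operator
open Matrix

/-- The smallest singular value of a matrix: the infimum of `‖M x‖` over unit vectors `x`
of Euclidean space. -/
noncomputable def sigmaMin {m n : Type*} [Fintype m] [Fintype n] [DecidableEq n]
    (M : Matrix m n ℝ) : ℝ :=
  sInf {r : ℝ | ∃ x : EuclideanSpace ℝ n, ‖x‖ = 1 ∧ r = ‖Matrix.toEuclideanLin M x‖}

/-- For a `(p·d) × k` block matrix `M` with `p` blocks of size `d × k`, the submatrix
consisting of blocks `i, i+1, …, i+len-1` (zero-indexed; this is `M_{i+1:i+len}` in the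
one-indexed notation of the paper). -/
def blockSlice {p d k : ℕ} (M : Matrix (Fin p × Fin d) (Fin k) ℝ) (i len : ℕ)
    (h : i + len ≤ p) : Matrix (Fin len × Fin d) (Fin k) ℝ :=
  fun rd c => M (⟨i + (rd.1 : ℕ), by have := rd.1.isLt; omega⟩, rd.2) c

section Helpers

variable {m n : Type*} [Fintype m] [Fintype n] [DecidableEq n]

lemma sigmaMin_le_norm (M : Matrix m n ℝ) {x : EuclideanSpace ℝ n} (hx : ‖x‖ = 1) :
    sigmaMin M ≤ ‖Matrix.toEuclideanLin M x‖ :=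
  csInf_le ⟨0, by rintro r ⟨z, hz, rfl⟩; exact norm_nonneg _⟩ ⟨x, hx, rfl⟩

lemma sigmaMin_mul_norm_le (M : Matrix m n ℝ) (x : EuclideanSpace ℝ n) :
    sigmaMin M * ‖x‖ ≤ ‖Matrix.toEuclideanLin M x‖ := by
  rcases eq_or_ne x 0 with rfl | hx
  · simp
  · have h1 : sigmaMin M ≤ ‖Matrix.toEuclideanLin M ((‖x‖⁻¹ : ℝ) • x)‖ :=
      sigmaMin_le_norm M (by simpa using norm_smul_inv_norm (𝕜 := ℝ) hx)
    have h2 : ‖Matrix.toEuclideanLin M ((‖x‖⁻¹ : ℝ) • x)‖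
        = ‖x‖⁻¹ * ‖Matrix.toEuclideanLin M x‖ := by
      rw [_root_.map_smul, norm_smul, norm_inv, norm_norm]
    have hxpos : (0 : ℝ) < ‖x‖ := norm_pos_iff.mpr hx
    rw [h2] at h1
    calc sigmaMin M * ‖x‖ ≤ (‖x‖⁻¹ * ‖Matrix.toEuclideanLin M x‖) * ‖x‖ :=
          mul_le_mul_of_nonneg_right h1 hxpos.le
      _ = ‖Matrix.toEuclideanLin M x‖ := by field_simp
lemma sigmaMin_pos [Nonempty n] (M : Matrix m n ℝ)
    (hinj : Function.Injective M.mulVec) : 0 < sigmaMin M := by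
  obtain ⟨x₀, hx₀s, hmin⟩ :=
    (isCompact_sphere (0 : EuclideanSpace ℝ n) 1).exists_isMinOn
      ⟨EuclideanSpace.single (Classical.arbitrary n) (1 : ℝ), by
        simp [mem_sphere_zero_iff_norm]⟩
      (((Matrix.toEuclideanLin M).continuous_of_finiteDimensional).norm.continuousOn)
  have hx₀ : ‖x₀‖ = 1 := mem_sphere_zero_iff_norm.mp hx₀s
  have hx₀ne : x₀ ≠ 0 := by intro h; rw [h] at hx₀; simp at hx₀
  have hMx₀ : Matrix.toEuclideanLin M x₀ ≠ 0 := by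
    intro h
    apply hx₀ne
    have h' : M *ᵥ (WithLp.equiv 2 (n → ℝ) x₀) = M *ᵥ (0 : n → ℝ) := by
      have := congrArg (WithLp.equiv 2 (m → ℝ)) h
      simpa [Matrix.toEuclideanLin_apply] using this
    have := hinj h'
    have : (WithLp.equiv 2 (n → ℝ)) x₀ = (WithLp.equiv 2 (n → ℝ)) 0 := by simpa using this
    exact (WithLp.equiv 2 (n → ℝ)).injective this
  have hpos : 0 < ‖Matrix.toEuclideanLin M x₀‖ := norm_pos_iff.mpr hMx₀
  refine lt_of_lt_of_le hpos (le_csInf ⟨_, x₀, hx₀, rfl⟩ ?_)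
  rintro r ⟨z, hz, rfl⟩
  exact hmin (mem_sphere_zero_iff_norm.mpr hz)

lemma pinv_apply_norm_le [DecidableEq m] {k : ℕ} (hk : 0 < k)
    (A : Matrix m (Fin k) ℝ) (hdet : IsUnit (Aᴴ * A).det)
    (hσ : 0 < sigmaMin A) (y : EuclideanSpace ℝ m) :
    ‖Matrix.toEuclideanLin ((Aᴴ * A)⁻¹ * Aᴴ) y‖ ≤ (sigmaMin A)⁻¹ * ‖y‖ := by
  set x : EuclideanSpace ℝ (Fin k) := Matrix.toEuclideanLin ((Aᴴ * A)⁻¹ * Aᴴ) y with hxdef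
  set x' : Fin k → ℝ := WithLp.equiv 2 (Fin k → ℝ) x with hx'
  set y' : m → ℝ := WithLp.equiv 2 (m → ℝ) y with hy'
  have hxy : (Aᴴ * A) *ᵥ x' = Aᴴ *ᵥ y' := by
    have hx'' : x' = ((Aᴴ * A)⁻¹ * Aᴴ) *ᵥ y' := rfl
    rw [hx'', Matrix.mulVec_mulVec, ← Matrix.mul_assoc, Matrix.mul_nonsing_inv _ hdet, Matrix.one_mul]
  have hinner : ∀ (u : EuclideanSpace ℝ m) (v : EuclideanSpace ℝ m),
      (inner ℝ u v : ℝ) = (WithLp.equiv 2 (m → ℝ) u) ⬝ᵥ (WithLp.equiv 2 (m → ℝ) v) := by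
    intro u v
    simp [PiLp.inner_apply, dotProduct, RCLike.inner_apply, mul_comm]
  have hAx : Matrix.toEuclideanLin A x = (WithLp.equiv 2 (m → ℝ)).symm (A *ᵥ x') := rfl
  have h1 : ‖Matrix.toEuclideanLin A x‖ ^ 2 = (A *ᵥ x') ⬝ᵥ (A *ᵥ x') := by
    rw [← real_inner_self_eq_norm_sq, hinner]
    simp [hAx]
  have h2 : (A *ᵥ x') ⬝ᵥ (A *ᵥ x') = y' ⬝ᵥ (A *ᵥ x') := by
    have hT : Aᴴ = Aᵀ := Matrix.conjTranspose_eq_transpose_of_trivial A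
    calc (A *ᵥ x') ⬝ᵥ (A *ᵥ x')
        = ((A *ᵥ x') ᵥ* A) ⬝ᵥ x' := Matrix.dotProduct_mulVec _ _ _
      _ = (Aᵀ *ᵥ (A *ᵥ x')) ⬝ᵥ x' := by rw [Matrix.mulVec_transpose]
      _ = ((Aᵀ * A) *ᵥ x') ⬝ᵥ x' := by rw [Matrix.mulVec_mulVec]
      _ = (Aᴴ *ᵥ y') ⬝ᵥ x' := by rw [← hT, hxy]
      _ = (y' ᵥ* A) ⬝ᵥ x' := by rw [hT, Matrix.mulVec_transpose]
      _ = y' ⬝ᵥ (A *ᵥ x') := (Matrix.dotProduct_mulVec _ _ _).symm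
  have h3 : y' ⬝ᵥ (A *ᵥ x') ≤ ‖y‖ * ‖Matrix.toEuclideanLin A x‖ := by
    have := real_inner_le_norm y (Matrix.toEuclideanLin A x)
    rwa [hinner, hAx] at this
    -- goal: dotProduct ≤ ..., after rw this is exactly it
  have hsq : ‖Matrix.toEuclideanLin A x‖ ^ 2 ≤ ‖y‖ * ‖Matrix.toEuclideanLin A x‖ := by
    rw [h1, h2]; exact h3
  have hAxle : ‖Matrix.toEuclideanLin A x‖ ≤ ‖y‖ := by
    rcases (norm_nonneg (Matrix.toEuclideanLin A x)).eq_or_lt with h | h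
    · rw [← h]; exact norm_nonneg y
    · have := hsq
      rw [pow_two] at this
      exact le_of_mul_le_mul_right (by linarith) h
  have hsx : sigmaMin A * ‖x‖ ≤ ‖Matrix.toEuclideanLin A x‖ := sigmaMin_mul_norm_le A x
  have : sigmaMin A * ‖x‖ ≤ ‖y‖ := hsx.trans hAxle
  calc ‖x‖ = (sigmaMin A)⁻¹ * (sigmaMin A * ‖x‖) := by field_simp
    _ ≤ (sigmaMin A)⁻¹ * ‖y‖ := mul_le_mul_of_nonneg_left this (inv_nonneg.mpr hσ.le)

end Helpers

lemma blockSlice_add {p d k : ℕ} (M N : Matrix (Fin p × Fin d) (Fin k) ℝ) (i len : ℕ)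
    (h : i + len ≤ p) :
    blockSlice (M + N) i len h = blockSlice M i len h + blockSlice N i len h := by
  ext rd c; rfl

lemma blockSlice_mul {p d k : ℕ} (M : Matrix (Fin p × Fin d) (Fin k) ℝ)
    (N : Matrix (Fin k) (Fin k) ℝ) (i len : ℕ) (h : i + len ≤ p) :
    blockSlice (M * N) i len h = blockSlice M i len h * N := by
  ext rd c; simp [blockSlice, Matrix.mul_apply]

lemma l2_opNorm_blockSlice_le {p d k : ℕ} (M : Matrix (Fin p × Fin d) (Fin k) ℝ)
    (i len : ℕ) (h : i + len ≤ p) : ‖blockSlice M i len h‖ ≤ ‖M‖ := by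
  rw [Matrix.l2_opNorm_def]
  refine ContinuousLinearMap.opNorm_le_bound _ (norm_nonneg M) fun x => ?_
  have key : ‖Matrix.toEuclideanLin (blockSlice M i len h) x‖
      ≤ ‖Matrix.toEuclideanLin M x‖ := by
    rw [EuclideanSpace.norm_eq, EuclideanSpace.norm_eq]
    apply Real.sqrt_le_sqrt
    set v : (Fin p × Fin d) → ℝ := fun rc => ‖(Matrix.toEuclideanLin M x) rc‖ ^ 2 with hv
    have hterm : ∀ rc : Fin len × Fin d,
        ‖(Matrix.toEuclideanLin (blockSlice M i len h) x) rc‖ ^ 2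
          = v ((⟨i + (rc.1 : ℕ), by have := rc.1.isLt; omega⟩ : Fin p), rc.2) := by
      intro rc; rfl
    rw [Finset.sum_congr rfl fun rc _ => hterm rc]
    set e : Fin len × Fin d → Fin p × Fin d :=
      fun rc => ((⟨i + (rc.1 : ℕ), by have := rc.1.isLt; omega⟩ : Fin p), rc.2) with he
    have hinj : Function.Injective e := by
      rintro ⟨r₁, c₁⟩ ⟨r₂, c₂⟩ hrc
      simp only [he, Prod.mk.injEq, Fin.mk.injEq] at hrc
      obtain ⟨h1, h2⟩ := hrc
      have : (r₁ : ℕ) = r₂ := by omega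
      exact Prod.ext (Fin.ext this) h2
    calc (∑ rc : Fin len × Fin d, v (e rc))
        = ∑ rc ∈ Finset.univ.image e, v rc :=
          (Finset.sum_image fun a _ b _ hab => hinj hab).symm
      _ ≤ ∑ rc : Fin p × Fin d, v rc :=
          Finset.sum_le_sum_of_subset_of_nonneg (Finset.subset_univ _)
            (fun rc _ _ => by positivity)
  exact key.trans (M.l2_opNorm_mulVec x)

/-- Core abstract estimate. -/
lemma key_estimate {m : Type*} [Fintype m] [DecidableEq m] {k : ℕ} (hk : 0 < k)
    (A B E₁ E₂ : Matrix m (Fin k) ℝ) (N₁ S : Matrix (Fin k) (Fin k) ℝ)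
    (hrank : A.rank = k) (hS : IsUnit S.det)
    (hshift : B * S + E₂ = (A * S + E₁) * N₁)
    (ε : ℝ) (hE1 : ‖E₁‖ ≤ ε) (hE2 : ‖E₂‖ ≤ ε) :
    ‖N₁ - S⁻¹ * ((Aᴴ * A)⁻¹ * Aᴴ * B) * S‖
      ≤ ‖S⁻¹‖ * (1 + ‖N₁‖) * ε / sigmaMin A := by
  haveI : Nonempty (Fin k) := ⟨⟨0, hk⟩⟩
  have hε : (0 : ℝ) ≤ ε := (norm_nonneg E₁).trans hE1
  -- injectivity of A from full rank
  have hrn := LinearMap.finrank_range_add_finrank_ker A.mulVecLin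
  have hdom : Module.finrank ℝ (Fin k → ℝ) = k := by
    simp [Module.finrank_fintype_fun_eq_card]
  have hrange : Module.finrank ℝ (LinearMap.range A.mulVecLin) = k := hrank
  have hker0 : Module.finrank ℝ (LinearMap.ker A.mulVecLin) = 0 := by omega
  have hker : LinearMap.ker A.mulVecLin = ⊥ := Submodule.finrank_eq_zero.mp hker0
  have hinjL : Function.Injective A.mulVecLin := LinearMap.ker_eq_bot.mp hker
  have hinjA : Function.Injective A.mulVec := fun u v huv => hinjL (by simpa only [Matrix.mulVecLin_apply] using huv)
  -- invertibility of the Gram matrix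
  have hkerG : LinearMap.ker (Aᴴ * A).mulVecLin = ⊥ :=
    (Matrix.ker_mulVecLin_conjTranspose_mul_self A).trans hker
  have hinjG : Function.Injective (Aᴴ * A).mulVec := fun u v huv =>
    (LinearMap.ker_eq_bot.mp hkerG) (by simpa only [Matrix.mulVecLin_apply] using huv)
  have hGunit : IsUnit (Aᴴ * A) := Matrix.mulVec_injective_iff_isUnit.mp hinjG
  have hGdet : IsUnit (Aᴴ * A).det := (Matrix.isUnit_iff_isUnit_det _).mp hGunit
  have hσ : 0 < sigmaMin A := sigmaMin_pos A hinjA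
  -- the pseudoinverse
  set P : Matrix (Fin k) m ℝ := (Aᴴ * A)⁻¹ * Aᴴ with hP
  have hPA : P * A = 1 := by
    rw [hP, Matrix.mul_assoc, Matrix.nonsing_inv_mul _ hGdet]
  have hSS : S⁻¹ * S = 1 := Matrix.nonsing_inv_mul S hS
  -- algebraic identity
  have hPBS : P * B * S = S * N₁ + P * (E₁ * N₁ - E₂) := by
    have hBS : B * S = (A * S + E₁) * N₁ - E₂ := eq_sub_of_add_eq hshift
    calc P * B * S = P * (B * S) := Matrix.mul_assoc _ _ _
      _ = P * ((A * S + E₁) * N₁ - E₂) := by rw [hBS]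
      _ = P * ((A * S) * N₁) + (P * (E₁ * N₁) - P * E₂) := by
          rw [Matrix.add_mul, Matrix.mul_sub, Matrix.mul_add, add_sub_assoc]
      _ = S * N₁ + (P * (E₁ * N₁) - P * E₂) := by
          rw [← Matrix.mul_assoc, ← Matrix.mul_assoc, hPA, Matrix.one_mul]
      _ = S * N₁ + P * (E₁ * N₁ - E₂) := by rw [Matrix.mul_sub]
  have hexpand : S⁻¹ * (P * B) * S = N₁ + S⁻¹ * (P * (E₁ * N₁ - E₂)) := by
    calc S⁻¹ * (P * B) * S = S⁻¹ * (P * B * S) := Matrix.mul_assoc _ _ _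
      _ = S⁻¹ * (S * N₁ + P * (E₁ * N₁ - E₂)) := by rw [hPBS]
      _ = S⁻¹ * (S * N₁) + S⁻¹ * (P * (E₁ * N₁ - E₂)) := by rw [Matrix.mul_add]
      _ = N₁ + S⁻¹ * (P * (E₁ * N₁ - E₂)) := by
          rw [← Matrix.mul_assoc, hSS, Matrix.one_mul]
  have hdiff : N₁ - S⁻¹ * (P * B) * S = -(S⁻¹ * (P * (E₁ * N₁ - E₂))) := by
    rw [hexpand]; abel
  rw [hdiff, norm_neg]
  -- norm bound on the pseudoinverse
  have hPnorm : ‖P‖ ≤ (sigmaMin A)⁻¹ := by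
    rw [Matrix.l2_opNorm_def]
    exact ContinuousLinearMap.opNorm_le_bound _ (inv_nonneg.mpr hσ.le)
      fun y => pinv_apply_norm_le hk A hGdet hσ y
  have hX : ‖E₁ * N₁ - E₂‖ ≤ ε * (1 + ‖N₁‖) := by
    calc ‖E₁ * N₁ - E₂‖ ≤ ‖E₁ * N₁‖ + ‖E₂‖ := norm_sub_le _ _
      _ ≤ ‖E₁‖ * ‖N₁‖ + ‖E₂‖ := by
          have := Matrix.l2_opNorm_mul E₁ N₁; linarith
      _ ≤ ε * ‖N₁‖ + ε := by
          have := mul_le_mul_of_nonneg_right hE1 (norm_nonneg N₁); linarith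
      _ = ε * (1 + ‖N₁‖) := by ring
  have hPX : ‖P * (E₁ * N₁ - E₂)‖ ≤ (sigmaMin A)⁻¹ * (ε * (1 + ‖N₁‖)) := by
    calc ‖P * (E₁ * N₁ - E₂)‖ ≤ ‖P‖ * ‖E₁ * N₁ - E₂‖ := Matrix.l2_opNorm_mul _ _
      _ ≤ (sigmaMin A)⁻¹ * (ε * (1 + ‖N₁‖)) :=
          mul_le_mul hPnorm hX (norm_nonneg _) (inv_nonneg.mpr hσ.le)
  calc ‖S⁻¹ * (P * (E₁ * N₁ - E₂))‖ ≤ ‖S⁻¹‖ * ‖P * (E₁ * N₁ - E₂)‖ :=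
        Matrix.l2_opNorm_mul _ _
    _ ≤ ‖S⁻¹‖ * ((sigmaMin A)⁻¹ * (ε * (1 + ‖N₁‖))) :=
        mul_le_mul_of_nonneg_left hPX (norm_nonneg _)
    _ = ‖S⁻¹‖ * (1 + ‖N₁‖) * ε / sigmaMin A := by
        rw [div_eq_mul_inv]; ring

/-- core perturbation estimate of Lemma 6.2. Suppose
`Õ_{2:p} = Õ_{1:p−1} N₁`, `Ô_{1:p−1}` has full column rank `k`, `Ŝ` is invertible,
`E := Õ − Ô Ŝ`, and `N̂₁ := (Ô_{1:p−1}ᴴ Ô_{1:p−1})⁻¹ Ô_{1:p−1}ᴴ Ô_{2:p}`. Then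
`‖N₁ − Ŝ⁻¹ N̂₁ Ŝ‖ ≤ ‖Ŝ⁻¹‖ (1 + ‖N₁‖) ‖E‖ / σ_min(Ô_{1:p−1})`. -/
theorem N1_similarity_error {p d k : ℕ} (hp : 2 ≤ p) (hd : 0 < d) (hk : 0 < k)
    (Otil Ohat : Matrix (Fin p × Fin d) (Fin k) ℝ)
    (N₁ S : Matrix (Fin k) (Fin k) ℝ)
    (hshift : blockSlice Otil 1 (p - 1) (by omega) =
      blockSlice Otil 0 (p - 1) (by omega) * N₁)
    (hrank : (blockSlice Ohat 0 (p - 1) (by omega)).rank = k)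
    (hS : IsUnit S.det)
    (E : Matrix (Fin p × Fin d) (Fin k) ℝ) (hE : E = Otil - Ohat * S)
    (N₁hat : Matrix (Fin k) (Fin k) ℝ)
    (hN₁hat : N₁hat =
      ((blockSlice Ohat 0 (p - 1) (by omega))ᴴ * blockSlice Ohat 0 (p - 1) (by omega))⁻¹ *
        (blockSlice Ohat 0 (p - 1) (by omega))ᴴ * blockSlice Ohat 1 (p - 1) (by omega)) :
    ‖N₁ - S⁻¹ * N₁hat * S‖ ≤
      ‖S⁻¹‖ * (1 + ‖N₁‖) * ‖E‖ / sigmaMin (blockSlice Ohat 0 (p - 1) (by omega)) := by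
  have h0 : 0 + (p - 1) ≤ p := by omega
  have h1 : 1 + (p - 1) ≤ p := by omega
  have hOtil : Otil = Ohat * S + E := by rw [hE]; abel
  have hshift' :
      blockSlice Ohat 1 (p - 1) h1 * S + blockSlice E 1 (p - 1) h1 =
        (blockSlice Ohat 0 (p - 1) h0 * S + blockSlice E 0 (p - 1) h0) * N₁ := by
    have e1 : blockSlice Otil 1 (p - 1) h1 =
        blockSlice Ohat 1 (p - 1) h1 * S + blockSlice E 1 (p - 1) h1 := by
      rw [hOtil, blockSlice_add, blockSlice_mul]
    have e0 : blockSlice Otil 0 (p - 1) h0 =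
        blockSlice Ohat 0 (p - 1) h0 * S + blockSlice E 0 (p - 1) h0 := by
      rw [hOtil, blockSlice_add, blockSlice_mul]
    rw [← e1, ← e0]
    exact hshift
  rw [hN₁hat]
  exact key_estimate hk (blockSlice Ohat 0 (p - 1) h0) (blockSlice Ohat 1 (p - 1) h1)
    (blockSlice E 0 (p - 1) h0) (blockSlice E 1 (p - 1) h1) N₁ S hrank hS hshift'
    ‖E‖ (l2_opNorm_blockSlice_le E 0 (p - 1) h0) (l2_opNorm_blockSlice_le E 1 (p - 1) h1)
end

section
/- Let C₀ be a d×k matrix, N₁ an invertible k×k matrix, s a positive integer, Ĉ a d×k matrix, N̂ a k×k matrix, and Ŝ an invertible k×k matrix. Suppose Õ₁ = C₀ N₁ˢ and Ô₁ = Ĉ N̂ for some d×k matrices Õ₁, Ô₁, and set E := Õ₁ − Ô₁ Ŝ. Then ‖C₀ − Ĉ Ŝ‖ ≤ ‖Ĉ Ŝ‖ · ‖Ŝ⁻¹ N̂ Ŝ N₁⁻ˢ − I‖ + ‖E‖ · ‖N₁⁻ˢ‖. -/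
open scoped Matrix.Norms.L2Operator
open Matrix

/-- core estimate of Lemma 6.3. Let `C₀` be `d × k`, `N₁` an invertible
`k × k` matrix, `s ≥ 1`, and suppose `Õ₁ = C₀ N₁ˢ`, `Ô₁ = Ĉ N̂`, `E := Õ₁ − Ô₁ Ŝ` with `Ŝ`
invertible. Then `‖C₀ − Ĉ Ŝ‖ ≤ ‖Ĉ Ŝ‖ ‖Ŝ⁻¹ N̂ Ŝ N₁⁻ˢ − I‖ + ‖E‖ ‖N₁⁻ˢ‖`. -/
theorem output_matrix_error {d k s : ℕ} (hs : 0 < s)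
    (C₀ Chat : Matrix (Fin d) (Fin k) ℝ)
    (N₁ Nhat S : Matrix (Fin k) (Fin k) ℝ)
    (hN₁ : IsUnit N₁.det) (hS : IsUnit S.det)
    (Otil₁ Ohat₁ : Matrix (Fin d) (Fin k) ℝ)
    (hOtil₁ : Otil₁ = C₀ * N₁ ^ s) (hOhat₁ : Ohat₁ = Chat * Nhat)
    (E : Matrix (Fin d) (Fin k) ℝ) (hE : E = Otil₁ - Ohat₁ * S) :
    ‖C₀ - Chat * S‖ ≤
      ‖Chat * S‖ * ‖S⁻¹ * Nhat * S * (N₁ ^ s)⁻¹ - 1‖ + ‖E‖ * ‖(N₁ ^ s)⁻¹‖ := by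
  have hNs : IsUnit (N₁ ^ s).det := by
    rw [Matrix.det_pow]; exact hN₁.pow s
  have hSS : S * S⁻¹ = 1 := Matrix.mul_nonsing_inv S hS
  have hNN : (N₁ ^ s) * (N₁ ^ s)⁻¹ = 1 := Matrix.mul_nonsing_inv _ hNs
  have key : C₀ - Chat * S =
      Chat * S * (S⁻¹ * Nhat * S * (N₁ ^ s)⁻¹ - 1) + E * (N₁ ^ s)⁻¹ := by
    subst hE hOtil₁ hOhat₁
    have h1 : Chat * S * (S⁻¹ * Nhat * S * (N₁ ^ s)⁻¹ - 1)
        = Chat * Nhat * S * (N₁ ^ s)⁻¹ - Chat * S := by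
      rw [Matrix.mul_sub, Matrix.mul_one]
      congr 1
      calc Chat * S * (S⁻¹ * Nhat * S * (N₁ ^ s)⁻¹)
          = Chat * (S * S⁻¹) * Nhat * S * (N₁ ^ s)⁻¹ := by
            simp only [Matrix.mul_assoc]
        _ = Chat * Nhat * S * (N₁ ^ s)⁻¹ := by rw [hSS, Matrix.mul_one]
    have h2 : (C₀ * N₁ ^ s - Chat * Nhat * S) * (N₁ ^ s)⁻¹
        = C₀ - Chat * Nhat * S * (N₁ ^ s)⁻¹ := by
      rw [Matrix.sub_mul, Matrix.mul_assoc C₀, hNN, Matrix.mul_one]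
    rw [h1, h2]
    abel
  rw [key]
  calc ‖Chat * S * (S⁻¹ * Nhat * S * (N₁ ^ s)⁻¹ - 1) + E * (N₁ ^ s)⁻¹‖
      ≤ ‖Chat * S * (S⁻¹ * Nhat * S * (N₁ ^ s)⁻¹ - 1)‖ + ‖E * (N₁ ^ s)⁻¹‖ :=
        norm_add_le _ _
    _ ≤ ‖Chat * S‖ * ‖S⁻¹ * Nhat * S * (N₁ ^ s)⁻¹ - 1‖ + ‖E‖ * ‖(N₁ ^ s)⁻¹‖ :=
        add_le_add (Matrix.l2_opNorm_mul _ _) (Matrix.l2_opNorm_mul _ _)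
end

section
/- Let B₀ be a k×d matrix, N₁ an invertible k×k matrix, s a positive integer, B̂ a k×d matrix, N̂ a k×k matrix, and Ŝ an invertible k×k matrix. Suppose C̃₁ = N₁ˢ B₀ and Ĉ₁ = N̂ B̂ for some k×d matrices C̃₁, Ĉ₁, and set E := C̃₁ − Ŝ⁻¹ Ĉ₁. Then ‖B₀ − Ŝ⁻¹ B̂‖ ≤ ‖N₁⁻ˢ Ŝ⁻¹ N̂ Ŝ − I‖ · ‖Ŝ⁻¹ B̂‖ + ‖N₁⁻ˢ‖ · ‖E‖. -/
open scoped Matrix.Norms.L2Operator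
open Matrix

/-- core estimate of Lemma 6.4. Let `B₀` be `k × d`, `N₁` an invertible
`k × k` matrix, `s ≥ 1`, and suppose `C̃₁ = N₁ˢ B₀`, `Ĉ₁ = N̂ B̂`, `E := C̃₁ − Ŝ⁻¹ Ĉ₁` with `Ŝ`
invertible. Then `‖B₀ − Ŝ⁻¹ B̂‖ ≤ ‖N₁⁻ˢ Ŝ⁻¹ N̂ Ŝ − I‖ ‖Ŝ⁻¹ B̂‖ + ‖N₁⁻ˢ‖ ‖E‖`. -/
theorem input_matrix_error {d k s : ℕ} (hs : 0 < s)
    (B₀ Bhat : Matrix (Fin k) (Fin d) ℝ)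
    (N₁ Nhat S : Matrix (Fin k) (Fin k) ℝ)
    (hN₁ : IsUnit N₁.det) (hS : IsUnit S.det)
    (Ctil₁ Chat₁ : Matrix (Fin k) (Fin d) ℝ)
    (hCtil₁ : Ctil₁ = N₁ ^ s * B₀) (hChat₁ : Chat₁ = Nhat * Bhat)
    (E : Matrix (Fin k) (Fin d) ℝ) (hE : E = Ctil₁ - S⁻¹ * Chat₁) :
    ‖B₀ - S⁻¹ * Bhat‖ ≤
      ‖(N₁ ^ s)⁻¹ * S⁻¹ * Nhat * S - 1‖ * ‖S⁻¹ * Bhat‖ + ‖(N₁ ^ s)⁻¹‖ * ‖E‖ := by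
  have hNs : IsUnit (N₁ ^ s).det := by
    rw [Matrix.det_pow]; exact hN₁.pow s
  have hNinv : (N₁ ^ s)⁻¹ * (N₁ ^ s) = 1 := Matrix.nonsing_inv_mul _ hNs
  have hSinv : S * S⁻¹ = 1 := Matrix.mul_nonsing_inv _ hS
  have hB₀ : B₀ = (N₁ ^ s)⁻¹ * S⁻¹ * Nhat * Bhat + (N₁ ^ s)⁻¹ * E := by
    have : (N₁ ^ s)⁻¹ * E = B₀ - (N₁ ^ s)⁻¹ * S⁻¹ * Nhat * Bhat := by
      rw [hE, hCtil₁, hChat₁, Matrix.mul_sub, ← Matrix.mul_assoc, hNinv, Matrix.one_mul,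
        Matrix.mul_assoc, Matrix.mul_assoc]
    rw [this]; abel
  have key : B₀ - S⁻¹ * Bhat =
      ((N₁ ^ s)⁻¹ * S⁻¹ * Nhat * S - 1) * (S⁻¹ * Bhat) + (N₁ ^ s)⁻¹ * E := by
    rw [hB₀]
    have : ((N₁ ^ s)⁻¹ * S⁻¹ * Nhat * S) * (S⁻¹ * Bhat) =
        (N₁ ^ s)⁻¹ * S⁻¹ * Nhat * Bhat := by
      rw [Matrix.mul_assoc ((N₁ ^ s)⁻¹ * S⁻¹ * Nhat) S, ← Matrix.mul_assoc S, hSinv,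
        Matrix.one_mul]
    rw [Matrix.sub_mul, this, Matrix.one_mul]
    abel
  rw [key]
  calc ‖((N₁ ^ s)⁻¹ * S⁻¹ * Nhat * S - 1) * (S⁻¹ * Bhat) + (N₁ ^ s)⁻¹ * E‖
      ≤ ‖((N₁ ^ s)⁻¹ * S⁻¹ * Nhat * S - 1) * (S⁻¹ * Bhat)‖ + ‖(N₁ ^ s)⁻¹ * E‖ :=
        norm_add_le _ _
    _ ≤ ‖(N₁ ^ s)⁻¹ * S⁻¹ * Nhat * S - 1‖ * ‖S⁻¹ * Bhat‖ + ‖(N₁ ^ s)⁻¹‖ * ‖E‖ :=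
        add_le_add (Matrix.l2_opNorm_mul _ _) (Matrix.l2_opNorm_mul _ _)
end
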